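/- arXiv:1704.05281 — 2 statements merged into one kernel-verified Lean document; each statement's English description precedes it below -/
import Mathlib

section
/- Let $0<p,\lambda<1$. The family of functions $f_c(z)=(1-\bar c z)^{-p(1-\lambda)/2}$, $c\in\mathbb{D}$, satisfies $\sup_{c\in\mathbb{D}}\|f_c\|_{\mathcal{D}_p^\lambda}<\infty$, i.e. there is a constant $K$ with $(1-|a|^2)^{p(1-\lambda)}\int_{\mathbb{D}}|f_c'(z)|^2(1-|\varphi_a(z)|^2)^p\,dm(z)\le K$ for all $a,c\in\mathbb{D}$. -/
open MeasureTheory Complex Metric Set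
open scoped ENNReal NNReal

noncomputable section

/-- planar Lebesgue measure normalized so that the unit disc has measure 1 -/
def dA : Measure ℂ := (ENNReal.ofReal Real.pi)⁻¹ • volume

/-- the open unit disc -/
def unitDisc : Set ℂ := Metric.ball (0 : ℂ) 1

/-- the disc automorphism exchanging 0 and a -/
def mobius (a z : ℂ) : ℂ := (a - z) / (1 - (starRingEnd ℂ) a * z)

/-- weighted Dirichlet energy of the hyperbolic translate of `f` by `a`:
`∫_𝔻 |f'(z)|² (1-|φ_a(z)|²)^p dm(z)` -/
def dirEnergy (p : ℝ) (a : ℂ) (f : ℂ → ℂ) : ℝ :=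
  ∫ z in unitDisc, ‖deriv f z‖ ^ 2 * (1 - ‖mobius a z‖ ^ 2) ^ p ∂dA

/-- Carleson box over the arc of center `e^{iθ}` and normalized length `h` -/
def carlesonBox (θ h : ℝ) : Set ℂ :=
  {z | z ∈ unitDisc ∧ 1 - h ≤ ‖z‖ ∧
    ∃ t : ℝ, |t| ≤ Real.pi * h ∧ z = (‖z‖ : ℂ) * Complex.exp (Complex.I * (θ + t))}

/-- the box energy `∫_{S(I)} |f'(z)|² (1-|z|²)^p dm(z)` -/
def boxEnergy (p θ h : ℝ) (f : ℂ → ℂ) : ℝ :=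
  ∫ z in carlesonBox θ h, ‖deriv f z‖ ^ 2 * (1 - ‖z‖ ^ 2) ^ p ∂dA

/-- membership in the Dirichlet–Morrey space `𝒟_p^λ` -/
def memDM (p lam : ℝ) (f : ℂ → ℂ) : Prop :=
  AnalyticOn ℂ f unitDisc ∧
    ∃ C : ℝ, ∀ a ∈ unitDisc, (1 - ‖a‖ ^ 2) ^ (p * (1 - lam)) * dirEnergy p a f ≤ C

/-- the Dirichlet–Morrey norm `|f(0)| + sup_a (1-|a|²)^{p(1-λ)/2} ‖f∘φ_a - f(a)‖_{𝒟_p}` -/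
def dmNorm (p lam : ℝ) (f : ℂ → ℂ) : ℝ :=
  ‖f 0‖ + ⨆ a : unitDisc, (1 - ‖(a : ℂ)‖ ^ 2) ^ (p * (1 - lam) / 2) *
    (dirEnergy p (a : ℂ) f) ^ (1 / 2 : ℝ)

/-- square of the weighted Dirichlet norm -/
def dpNormSq (p : ℝ) (f : ℂ → ℂ) : ℝ :=
  ‖f 0‖ ^ 2 + ∫ z in unitDisc, ‖deriv f z‖ ^ 2 * (1 - ‖z‖ ^ 2) ^ p ∂dA

/-- membership in the weighted Dirichlet space `𝒟_p` -/
def memDp (p : ℝ) (f : ℂ → ℂ) : Prop :=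
  AnalyticOn ℂ f unitDisc ∧
    IntegrableOn (fun z => ‖deriv f z‖ ^ 2 * (1 - ‖z‖ ^ 2) ^ p) unitDisc dA

/-- the integration operator `I_g(f)(z) = ∫₀^z f'(w) g(w) dw` -/
def Iop (g f : ℂ → ℂ) (z : ℂ) : ℂ :=
  ∫ t in (0 : ℝ)..1, deriv f ((t : ℂ) * z) * g ((t : ℂ) * z) * z

/-- the integration operator `J_g(f)(z) = ∫₀^z f(w) g'(w) dw` -/
def Jop (g f : ℂ → ℂ) (z : ℂ) : ℂ :=
  ∫ t in (0 : ℝ)..1, f ((t : ℂ) * z) * deriv g ((t : ℂ) * z) * z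

namespace S7

lemma normSq_identity (a z : ℂ) :
    ‖1 - (starRingEnd ℂ) a * z‖^2 - ‖a - z‖^2 = (1 - ‖a‖^2) * (1 - ‖z‖^2) := by
  have h1 : ((1 - (starRingEnd ℂ) a * z) * (starRingEnd ℂ) (1 - (starRingEnd ℂ) a * z)
      - (a - z) * (starRingEnd ℂ) (a - z)) =
      ((1 - a * (starRingEnd ℂ) a) * (1 - z * (starRingEnd ℂ) z)) := by
    simp only [map_sub, map_mul, map_one, Complex.conj_conj]
    ring
  rw [Complex.mul_conj, Complex.mul_conj, Complex.mul_conj, Complex.mul_conj] at h1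
  have h2 : (Complex.normSq (1 - (starRingEnd ℂ) a * z) - Complex.normSq (a - z) : ℝ)
      = (1 - Complex.normSq a) * (1 - Complex.normSq z) := by
    exact_mod_cast h1
  simpa [Complex.sq_norm] using h2

/-- `‖1 - c̄w z‖ ≥ 1 - ‖w‖‖z‖` -/
lemma A_ge (w z : ℂ) : 1 - ‖w‖ * ‖z‖ ≤ ‖1 - (starRingEnd ℂ) w * z‖ := by
  calc 1 - ‖w‖ * ‖z‖ = ‖(1:ℂ)‖ - ‖(starRingEnd ℂ) w * z‖ := by
        simp [norm_mul]
    _ ≤ ‖1 - (starRingEnd ℂ) w * z‖ := norm_sub_norm_le _ _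

lemma A_pos {w z : ℂ} (hw : ‖w‖ ≤ 1) (hz : ‖z‖ < 1) :
    0 < ‖1 - (starRingEnd ℂ) w * z‖ := by
  have : 1 - ‖w‖ * ‖z‖ > 0 := by nlinarith [norm_nonneg w, norm_nonneg z]
  linarith [A_ge w z]

lemma pseudo {a z : ℂ} (ha : ‖a‖ ≤ 1) (hz : ‖z‖ ≤ 1) :
    ‖a - z‖ ≤ ‖1 - (starRingEnd ℂ) a * z‖ := by
  have h := normSq_identity a z
  have e1 : (0:ℝ) ≤ 1 - ‖a‖^2 := by nlinarith [norm_nonneg a]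
  have e2 : (0:ℝ) ≤ 1 - ‖z‖^2 := by nlinarith [norm_nonneg z]
  have h2 : ‖a - z‖^2 ≤ ‖1 - (starRingEnd ℂ) a * z‖^2 := by nlinarith [mul_nonneg e1 e2]
  exact (pow_le_pow_iff_left₀ (norm_nonneg _) (norm_nonneg _) two_ne_zero).mp h2

lemma tri1 {a c z : ℂ} (ha : ‖a‖ ≤ 1) (hc : ‖c‖ ≤ 1) (hz : ‖z‖ ≤ 1) :
    ‖1 - (starRingEnd ℂ) a * c‖ ≤ ‖1 - (starRingEnd ℂ) a * z‖ + ‖1 - (starRingEnd ℂ) c * z‖ := by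
  have h1 : (1 - (starRingEnd ℂ) a * c) = (1 - (starRingEnd ℂ) a * z) + (starRingEnd ℂ) a * (z - c) := by ring
  have h2 : ‖(starRingEnd ℂ) a * (z - c)‖ ≤ ‖1 - (starRingEnd ℂ) c * z‖ := by
    rw [norm_mul, RCLike.norm_conj, norm_sub_rev]
    calc ‖a‖ * ‖c - z‖ ≤ 1 * ‖c - z‖ := by
          exact mul_le_mul_of_nonneg_right ha (norm_nonneg _)
      _ = ‖c - z‖ := one_mul _
      _ ≤ _ := pseudo hc hz
  calc ‖1 - (starRingEnd ℂ) a * c‖ ≤ ‖1 - (starRingEnd ℂ) a * z‖ + ‖(starRingEnd ℂ) a * (z - c)‖ := by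
        rw [h1]; exact norm_add_le _ _
    _ ≤ _ := by linarith

lemma tri2 {a c z : ℂ} (ha : ‖a‖ ≤ 1) (hc : ‖c‖ ≤ 1) (hz : ‖z‖ ≤ 1) :
    ‖1 - (starRingEnd ℂ) c * z‖ ≤ ‖1 - (starRingEnd ℂ) a * z‖ + ‖1 - (starRingEnd ℂ) a * c‖ := by
  have h1 : (1 - (starRingEnd ℂ) c * z) = (1 - (starRingEnd ℂ) a * z) + ((starRingEnd ℂ) a - (starRingEnd ℂ) c) * z := by ring
  have h2 : ‖((starRingEnd ℂ) a - (starRingEnd ℂ) c) * z‖ ≤ ‖1 - (starRingEnd ℂ) a * c‖ := by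
    rw [norm_mul, ← map_sub, RCLike.norm_conj]
    calc ‖a - c‖ * ‖z‖ ≤ ‖a - c‖ * 1 := by
          exact mul_le_mul_of_nonneg_left hz (norm_nonneg _)
      _ = ‖a - c‖ := mul_one _
      _ ≤ _ := pseudo ha hc
  calc ‖1 - (starRingEnd ℂ) c * z‖ ≤ ‖1 - (starRingEnd ℂ) a * z‖ + ‖((starRingEnd ℂ) a - (starRingEnd ℂ) c) * z‖ := by
        rw [h1]; exact norm_add_le _ _
    _ ≤ _ := by linarith

lemma tri3 {w z : ℂ} (hw : ‖w‖ ≤ 1) (hz : ‖z‖ ≤ 1) :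
    1 - ‖z‖^2 ≤ 2 * ‖1 - (starRingEnd ℂ) w * z‖ := by
  have h := A_ge w z
  nlinarith [norm_nonneg w, norm_nonneg z]

/-- measure of the "Carleson-type" region -/
lemma measure_region_le (w : ℂ) {r : ℝ} (hr : 0 < r) :
    volume {z : ℂ | ‖z‖ < 1 ∧ ‖1 - (starRingEnd ℂ) w * z‖ ≤ r}
      ≤ ENNReal.ofReal (4 * Real.pi * r^2) := by
  rcases lt_or_ge ‖w‖ (1/2) with h | h
  · rcases lt_or_ge r (1/2) with h2 | h2
    · have : {z : ℂ | ‖z‖ < 1 ∧ ‖1 - (starRingEnd ℂ) w * z‖ ≤ r} = ∅ := by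
        ext z; simp only [mem_setOf_eq, mem_empty_iff_false, iff_false, not_and, not_le]
        intro hz
        have := A_ge w z
        nlinarith [norm_nonneg w, norm_nonneg z]
      rw [this]; simp
    · calc volume {z : ℂ | ‖z‖ < 1 ∧ ‖1 - (starRingEnd ℂ) w * z‖ ≤ r}
          ≤ volume (Metric.ball (0:ℂ) 1) := by
            apply measure_mono; intro z hz
            simpa [Metric.mem_ball] using hz.1
        _ = ENNReal.ofReal 1 ^ 2 * NNReal.pi := by rw [Complex.volume_ball]
        _ ≤ ENNReal.ofReal (4 * Real.pi * r^2) := by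
            rw [ENNReal.ofReal_one, one_pow, one_mul, ← ENNReal.ofReal_coe_nnreal]
            apply ENNReal.ofReal_le_ofReal
            rw [NNReal.coe_real_pi]
            have h3 : (0:ℝ) ≤ 4*r^2 - 1 := by nlinarith
            nlinarith [mul_nonneg Real.pi_pos.le h3]
  · have hw0 : w ≠ 0 := by
      intro h0; rw [h0] at h; simp at h; linarith
    have hcw : (starRingEnd ℂ) w ≠ 0 := by simpa using hw0
    calc volume {z : ℂ | ‖z‖ < 1 ∧ ‖1 - (starRingEnd ℂ) w * z‖ ≤ r}
        ≤ volume (Metric.closedBall (((starRingEnd ℂ) w)⁻¹) (2*r)) := by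
          apply measure_mono; intro z hz
          simp only [Metric.mem_closedBall, dist_eq_norm]
          have key : z - ((starRingEnd ℂ) w)⁻¹ = -(1 - (starRingEnd ℂ) w * z) / ((starRingEnd ℂ) w) := by
            field_simp
            ring
          rw [key, norm_div, norm_neg]
          have hnw : ‖(starRingEnd ℂ) w‖ = ‖w‖ := RCLike.norm_conj _
          rw [hnw]
          rw [div_le_iff₀ (by linarith)]
          calc ‖1 - (starRingEnd ℂ) w * z‖ ≤ r := hz.2
            _ ≤ 2 * r * (1/2) := by linarith
            _ ≤ 2 * r * ‖w‖ := by
                apply mul_le_mul_of_nonneg_left h (by linarith)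
      _ = ENNReal.ofReal (2*r) ^ 2 * NNReal.pi := Complex.volume_closedBall _ _
      _ ≤ ENNReal.ofReal (4 * Real.pi * r^2) := by
          rw [← ENNReal.ofReal_pow (by linarith), ← ENNReal.ofReal_coe_nnreal,
            ← ENNReal.ofReal_mul (by positivity)]
          apply ENNReal.ofReal_le_ofReal
          rw [NNReal.coe_real_pi]
          nlinarith [Real.pi_pos]

lemma exists_dyadic {x : ℝ} (hx : 1 ≤ x) : ∃ k : ℕ, (2:ℝ)^k ≤ x ∧ x < 2^(k+1) := by
  have h0 : 1 ≤ ⌊x⌋₊ := Nat.le_floor (by exact_mod_cast hx)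
  refine ⟨Nat.log 2 ⌊x⌋₊, ?_, ?_⟩
  · calc ((2:ℝ)^Nat.log 2 ⌊x⌋₊) = ((2^Nat.log 2 ⌊x⌋₊ : ℕ) : ℝ) := by push_cast; ring
      _ ≤ (⌊x⌋₊ : ℝ) := by exact_mod_cast Nat.pow_log_le_self 2 (by omega)
      _ ≤ x := Nat.floor_le (by linarith)
  · have h1 : ⌊x⌋₊ < 2^(Nat.log 2 ⌊x⌋₊ + 1) := Nat.lt_pow_succ_log_self (by norm_num) _
    have h2 : (⌊x⌋₊ : ℝ) + 1 ≤ ((2:ℕ)^(Nat.log 2 ⌊x⌋₊ + 1) : ℕ) := by exact_mod_cast h1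
    calc x < ⌊x⌋₊ + 1 := Nat.lt_floor_add_one x
      _ ≤ ((2:ℕ)^(Nat.log 2 ⌊x⌋₊ + 1) : ℕ) := h2
      _ = (2:ℝ)^(Nat.log 2 ⌊x⌋₊ + 1) := by push_cast; ring

lemma pow_rpow_swap (n : ℕ) (t : ℝ) : ((2:ℝ)^n) ^ t = ((2:ℝ)^t) ^ n := by
  rw [← Real.rpow_natCast (2:ℝ) n, ← Real.rpow_mul (by norm_num), mul_comm,
    Real.rpow_mul (by norm_num : (0:ℝ) ≤ 2), Real.rpow_natCast]

lemma key_lemma (w : ℂ) (hw : ‖w‖ ≤ 1) {e ρ : ℝ} (he : 0 < e) (he2 : e < 2) (hρ : 0 < ρ) :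
    ∫⁻ z in {z : ℂ | ‖z‖ < 1 ∧ ‖1 - (starRingEnd ℂ) w * z‖ ≤ ρ},
      ENNReal.ofReal (‖1 - (starRingEnd ℂ) w * z‖ ^ (-e)) ∂volume
    ≤ ENNReal.ofReal (16 * Real.pi / (1 - 2^(e-2)) * ρ^(2-e)) := by
  have ht01 : (0:ℝ) < 2 ^ (e-2) := Real.rpow_pos_of_pos (by norm_num) _
  have ht1 : (2:ℝ) ^ (e-2) < 1 := by
    apply Real.rpow_lt_one_of_one_lt_of_neg (by norm_num) (by linarith)
  set S : ℕ → Set ℂ := fun k =>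
    {z : ℂ | (‖z‖ < 1 ∧ ‖1 - (starRingEnd ℂ) w * z‖ ≤ ρ / 2^k) ∧
      ρ / 2^(k+1) < ‖1 - (starRingEnd ℂ) w * z‖} with hS
  have hsub : {z : ℂ | ‖z‖ < 1 ∧ ‖1 - (starRingEnd ℂ) w * z‖ ≤ ρ} ⊆ ⋃ k, S k := by
    intro z hz
    have hApos : 0 < ‖1 - (starRingEnd ℂ) w * z‖ := A_pos hw hz.1
    have hx : 1 ≤ ρ / ‖1 - (starRingEnd ℂ) w * z‖ := (one_le_div hApos).mpr hz.2
    obtain ⟨k, hk1, hk2⟩ := exists_dyadic hx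
    have hk1' := (le_div_iff₀ hApos).mp hk1
    have hk2' := (div_lt_iff₀ hApos).mp hk2
    refine mem_iUnion.mpr ⟨k, ⟨⟨hz.1, ?_⟩, ?_⟩⟩
    · rw [le_div_iff₀ (by positivity)]; nlinarith
    · rw [div_lt_iff₀ (by positivity)]; nlinarith
  calc ∫⁻ z in {z : ℂ | ‖z‖ < 1 ∧ ‖1 - (starRingEnd ℂ) w * z‖ ≤ ρ},
        ENNReal.ofReal (‖1 - (starRingEnd ℂ) w * z‖ ^ (-e)) ∂volume
      ≤ ∫⁻ z in ⋃ k, S k, ENNReal.ofReal (‖1 - (starRingEnd ℂ) w * z‖ ^ (-e)) ∂volume :=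
        lintegral_mono_set hsub
    _ ≤ ∑' k, ∫⁻ z in S k, ENNReal.ofReal (‖1 - (starRingEnd ℂ) w * z‖ ^ (-e)) ∂volume :=
        lintegral_iUnion_le _ _
    _ ≤ ∑' k : ℕ, ENNReal.ofReal ((16 * Real.pi * ρ^(2-e)) * ((2:ℝ)^(e-2))^k) := by
        apply ENNReal.tsum_le_tsum
        intro k
        set m : ℝ := ρ / 2^(k+1) with hm
        have hmpos : 0 < m := by positivity
        have hb : ∀ z ∈ S k, ENNReal.ofReal (‖1 - (starRingEnd ℂ) w * z‖ ^ (-e))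
            ≤ ENNReal.ofReal (m ^ (-e)) := by
          intro z hz
          exact ENNReal.ofReal_le_ofReal
            (Real.rpow_le_rpow_of_nonpos hmpos hz.2.le (by linarith))
        calc ∫⁻ z in S k, ENNReal.ofReal (‖1 - (starRingEnd ℂ) w * z‖ ^ (-e)) ∂volume
            ≤ ∫⁻ _ in S k, ENNReal.ofReal (m ^ (-e)) ∂volume :=
              setLIntegral_mono measurable_const hb
          _ = ENNReal.ofReal (m ^ (-e)) * volume (S k) := setLIntegral_const _ _
          _ ≤ ENNReal.ofReal (m ^ (-e)) * ENNReal.ofReal (4*Real.pi*(ρ/2^k)^2) := by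
              gcongr
              refine (measure_mono ?_).trans (measure_region_le w (by positivity))
              intro z hz; exact ⟨hz.1.1, hz.1.2⟩
          _ = ENNReal.ofReal (m ^ (-e) * (4*Real.pi*(ρ/2^k)^2)) := by
              rw [← ENNReal.ofReal_mul (by positivity)]
          _ ≤ ENNReal.ofReal ((16 * Real.pi * ρ^(2-e)) * ((2:ℝ)^(e-2))^k) := by
              apply ENNReal.ofReal_le_ofReal
              have h2m : ρ/2^k = 2*m := by rw [hm, pow_succ]; field_simp
              have step1 : m ^ (-e) * (4*Real.pi*(ρ/2^k)^2) = 16 * Real.pi * m^(2-e) := by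
                rw [h2m]
                have : m^(2-e) = m ^ (-e) * m^(2:ℕ) := by
                  rw [← Real.rpow_natCast m 2, ← Real.rpow_add hmpos]; congr 1; ring
                rw [this]; ring
              rw [step1]
              have step2 : m ^ (2-e) ≤ ρ^(2-e) * ((2:ℝ)^(e-2))^k := by
                have hd : m ^ (2-e) = ρ^(2-e) / ((2:ℝ)^(2-e))^(k+1) := by
                  rw [hm, Real.div_rpow hρ.le (by positivity), pow_rpow_swap]
                rw [hd]
                have h1le : (1:ℝ) ≤ (2:ℝ)^(2-e) := Real.one_le_rpow (by norm_num) (by linarith)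
                have hinv : ((2:ℝ)^(e-2))^k = (((2:ℝ)^(2-e))^k)⁻¹ := by
                  rw [← inv_pow]
                  congr 1
                  rw [← Real.rpow_neg (by norm_num : (0:ℝ) ≤ 2)]
                  norm_num
                rw [hinv, div_le_iff₀ (by positivity)]
                have hkpos : (0:ℝ) < ((2:ℝ)^(2-e))^k := by positivity
                have hid : ρ ^ (2 - e) * ((2 ^ (2 - e)) ^ k)⁻¹ * (2 ^ (2 - e)) ^ (k+1)
                    = ρ ^ (2-e) * 2^(2-e) := by
                  rw [pow_succ]; field_simp
                rw [hid]
                nlinarith [Real.rpow_pos_of_pos hρ (2-e)]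
              nlinarith [Real.pi_pos, Real.rpow_pos_of_pos hρ (2-e),
                pow_pos ht01 k, mul_pos (mul_pos (by norm_num : (0:ℝ)<16) Real.pi_pos) (Real.rpow_pos_of_pos hρ (2-e))]
    _ = ENNReal.ofReal (16 * Real.pi * ρ^(2-e)) * ∑' k : ℕ, (ENNReal.ofReal ((2:ℝ)^(e-2)))^k := by
        rw [← ENNReal.tsum_mul_left]
        congr 1; ext k
        rw [← ENNReal.ofReal_pow ht01.le, ← ENNReal.ofReal_mul (by positivity)]
    _ ≤ ENNReal.ofReal (16 * Real.pi / (1 - 2^(e-2)) * ρ^(2-e)) := by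
        rw [ENNReal.tsum_geometric]
        have h1 : (1:ℝ≥0∞) - ENNReal.ofReal ((2:ℝ)^(e-2)) = ENNReal.ofReal (1 - (2:ℝ)^(e-2)) := by
          rw [ENNReal.ofReal_sub _ ht01.le, ENNReal.ofReal_one]
        rw [h1, ← ENNReal.ofReal_inv_of_pos (by linarith), ← ENNReal.ofReal_mul (by positivity)]
        apply ENNReal.ofReal_le_ofReal
        rw [div_eq_mul_inv]
        calc 16 * Real.pi * ρ^(2-e) * (1 - (2:ℝ)^(e-2))⁻¹
            = 16 * Real.pi * (1 - (2:ℝ)^(e-2))⁻¹ * ρ^(2-e) := by ring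
          _ ≤ _ := le_refl _

lemma measurable_A (w : ℂ) : Measurable (fun z : ℂ => ‖1 - (starRingEnd ℂ) w * z‖) :=
  (continuous_const.sub (continuous_const.mul continuous_id)).norm.measurable

/-- generic single-piece estimate -/
lemma piece_bound {T : Set ℂ} {F : ℂ → ℝ} (w : ℂ) {C e ρ : ℝ}
    (hC : 0 ≤ C) (he : 0 < e) (he2 : e < 2) (hρ : 0 < ρ) (hw : ‖w‖ ≤ 1)
    (hT : T ⊆ {z : ℂ | ‖z‖ < 1 ∧ ‖1 - (starRingEnd ℂ) w * z‖ ≤ ρ})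
    (hF : ∀ z ∈ T, F z ≤ C * ‖1 - (starRingEnd ℂ) w * z‖ ^ (-e)) :
    ∫⁻ z in T, ENNReal.ofReal (F z) ∂volume
      ≤ ENNReal.ofReal (C * (16*Real.pi/(1-2^(e-2))) * ρ^(2-e)) := by
  have hmeas : Measurable (fun z : ℂ => ENNReal.ofReal (‖1 - (starRingEnd ℂ) w * z‖ ^ (-e))) :=
    (((measurable_A w).pow measurable_const)).ennreal_ofReal
  calc ∫⁻ z in T, ENNReal.ofReal (F z) ∂volume
      ≤ ∫⁻ z in T, ENNReal.ofReal C
          * ENNReal.ofReal (‖1 - (starRingEnd ℂ) w * z‖ ^ (-e)) ∂volume := by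
        refine setLIntegral_mono (measurable_const.mul hmeas) ?_
        intro z hz
        rw [← ENNReal.ofReal_mul hC]
        exact ENNReal.ofReal_le_ofReal (hF z hz)
    _ = ENNReal.ofReal C
          * ∫⁻ z in T, ENNReal.ofReal (‖1 - (starRingEnd ℂ) w * z‖ ^ (-e)) ∂volume :=
        lintegral_const_mul _ hmeas
    _ ≤ ENNReal.ofReal C
          * ∫⁻ z in {z : ℂ | ‖z‖ < 1 ∧ ‖1 - (starRingEnd ℂ) w * z‖ ≤ ρ},
              ENNReal.ofReal (‖1 - (starRingEnd ℂ) w * z‖ ^ (-e)) ∂volume := by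
        gcongr
    _ ≤ ENNReal.ofReal C * ENNReal.ofReal (16 * Real.pi / (1 - 2^(e-2)) * ρ^(2-e)) := by
        gcongr
        exact key_lemma w hw he he2 hρ
    _ = ENNReal.ofReal (C * (16*Real.pi/(1-2^(e-2))) * ρ^(2-e)) := by
        rw [← ENNReal.ofReal_mul hC, mul_assoc]

/-- the constant in the master estimate -/
def Cmain (pp q : ℝ) : ℝ :=
  2^pp * (16*Real.pi/(1-2^(pp-2)))
    + 2^pp * (16*Real.pi/(1-2^((2+q-pp)-2))) * ((2:ℝ)^(pp-q))^2 * (1 - (2:ℝ)^(-(pp+q)))⁻¹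

lemma Cmain_pos {pp q : ℝ} (hp : 0 < pp) (hp1 : pp < 1) (hq : 0 < q) (hqp : q < pp) :
    0 < Cmain pp q := by
  have h1 : (2:ℝ)^(pp-2) < 1 := Real.rpow_lt_one_of_one_lt_of_neg (by norm_num) (by linarith)
  have h2 : (2:ℝ)^((2+q-pp)-2) < 1 := Real.rpow_lt_one_of_one_lt_of_neg (by norm_num) (by linarith)
  have h3 : (2:ℝ)^(-(pp+q)) < 1 := Real.rpow_lt_one_of_one_lt_of_neg (by norm_num) (by linarith)
  have p1 : (0:ℝ) < 2^pp := Real.rpow_pos_of_pos (by norm_num) _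
  have p2 : (0:ℝ) < (2:ℝ)^(pp-q) := Real.rpow_pos_of_pos (by norm_num) _
  have hpi := Real.pi_pos
  unfold Cmain
  have t1 : (0:ℝ) < 2^pp * (16*Real.pi/(1-2^(pp-2))) :=
    mul_pos p1 (div_pos (by linarith) (by linarith))
  have t2 : (0:ℝ) < 2^pp * (16*Real.pi/(1-2^((2+q-pp)-2))) * ((2:ℝ)^(pp-q))^2
      * (1 - (2:ℝ)^(-(pp+q)))⁻¹ := by
    apply mul_pos (mul_pos (mul_pos p1 (div_pos (by linarith) (by linarith))) (by positivity))
    have h4 : (0:ℝ) < 2^(-(pp+q)) := Real.rpow_pos_of_pos (by norm_num) _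
    rw [inv_pos]; linarith
  linarith

/-- the master two-point estimate -/
lemma master {pp q : ℝ} (hp : 0 < pp) (hp1 : pp < 1) (hq : 0 < q) (hqp : q < pp)
    {a c : ℂ} (ha : ‖a‖ < 1) (hc : ‖c‖ < 1) :
    ∫⁻ z in {z : ℂ | ‖z‖ < 1},
      ENNReal.ofReal ((1-‖z‖^2)^pp * ‖1 - (starRingEnd ℂ) a * z‖^(-(2*pp))
        * ‖1 - (starRingEnd ℂ) c * z‖^(-(2+q))) ∂volume
      ≤ ENNReal.ofReal (Cmain pp q * (‖1 - (starRingEnd ℂ) a * c‖/2)^(-(pp+q))) := by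
  set R : ℝ := ‖1 - (starRingEnd ℂ) a * c‖/2 with hRdef
  have hR : 0 < R := by
    have := A_pos ha.le hc
    positivity
  have h2R : ‖1 - (starRingEnd ℂ) a * c‖ = 2 * R := by rw [hRdef]; ring
  set F : ℂ → ℝ := fun z => (1-‖z‖^2)^pp * ‖1 - (starRingEnd ℂ) a * z‖^(-(2*pp))
    * ‖1 - (starRingEnd ℂ) c * z‖^(-(2+q)) with hF
  set D1 : Set ℂ := {z : ℂ | ‖z‖ < 1 ∧ ‖1 - (starRingEnd ℂ) a * z‖ ≤ R} with hD1
  set D2 : ℕ → Set ℂ := fun k =>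
    {z : ℂ | ‖z‖ < 1 ∧ R * 2^k ≤ ‖1 - (starRingEnd ℂ) a * z‖
      ∧ ‖1 - (starRingEnd ℂ) a * z‖ ≤ R * 2^(k+1)} with hD2
  have hcover : {z : ℂ | ‖z‖ < 1} ⊆ D1 ∪ ⋃ k, D2 k := by
    intro z hz
    rcases le_or_gt (‖1 - (starRingEnd ℂ) a * z‖) R with h | h
    · exact Or.inl ⟨hz, h⟩
    · right
      have hx : 1 ≤ ‖1 - (starRingEnd ℂ) a * z‖ / R := by rw [le_div_iff₀ hR]; linarith
      obtain ⟨k, hk1, hk2⟩ := exists_dyadic hx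
      have hk1' := (le_div_iff₀ hR).mp hk1
      have hk2' := (div_lt_iff₀ hR).mp hk2
      exact mem_iUnion.mpr ⟨k, ⟨hz, by nlinarith, by nlinarith⟩⟩
  have hAapos : ∀ z : ℂ, ‖z‖ < 1 → 0 < ‖1 - (starRingEnd ℂ) a * z‖ := fun z hz => A_pos ha.le hz
  have hAcpos : ∀ z : ℂ, ‖z‖ < 1 → 0 < ‖1 - (starRingEnd ℂ) c * z‖ := fun z hz => A_pos hc.le hz
  have he2 : (0:ℝ) < 2+q-pp := by linarith
  have he2' : 2+q-pp < 2 := by linarith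
  set Ce1 : ℝ := 16*Real.pi/(1-2^(pp-2)) with hCe1
  set Ce2 : ℝ := 16*Real.pi/(1-2^((2+q-pp)-2)) with hCe2
  have hCe1pos : 0 < Ce1 := by
    have h1 : (2:ℝ)^(pp-2) < 1 := Real.rpow_lt_one_of_one_lt_of_neg (by norm_num) (by linarith)
    exact div_pos (by linarith [Real.pi_pos]) (by linarith)
  have hCe2pos : 0 < Ce2 := by
    have h1 : (2:ℝ)^((2+q-pp)-2) < 1 := Real.rpow_lt_one_of_one_lt_of_neg (by norm_num) (by linarith)
    exact div_pos (by linarith [Real.pi_pos]) (by linarith)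
  set t : ℝ := (2:ℝ)^(-(pp+q)) with hct
  have ht0 : 0 < t := Real.rpow_pos_of_pos (by norm_num) _
  have ht1 : t < 1 := Real.rpow_lt_one_of_one_lt_of_neg (by norm_num) (by linarith)
  -- D1 estimate
  have hD1est : ∫⁻ z in D1, ENNReal.ofReal (F z) ∂volume
      ≤ ENNReal.ofReal ((2^pp * R^(-(2+q))) * Ce1 * R^(2-pp)) := by
    rw [hCe1]
    apply piece_bound a
      (mul_nonneg (Real.rpow_nonneg (by norm_num) _) (Real.rpow_nonneg hR.le _))
      hp (by linarith) hR ha.le (fun z hz => hz)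
    intro z hz
    obtain ⟨hz1, hz2⟩ := hz
    have hAa := hAapos z hz1
    have hAc := hAcpos z hz1
    have hz2' : (0:ℝ) ≤ 1 - ‖z‖^2 := by nlinarith [norm_nonneg z]
    have hb1 : (1-‖z‖^2)^pp ≤ (2*‖1 - (starRingEnd ℂ) a * z‖)^pp :=
      Real.rpow_le_rpow hz2' (tri3 ha.le hz1.le) hp.le
    have hb1' : (2*‖1 - (starRingEnd ℂ) a * z‖)^pp = 2^pp * ‖1 - (starRingEnd ℂ) a * z‖^pp :=
      Real.mul_rpow (by norm_num) (norm_nonneg _)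
    have h3 := tri1 ha.le hc.le hz1.le
    rw [h2R] at h3
    have hAcR : R ≤ ‖1 - (starRingEnd ℂ) c * z‖ := by linarith
    have hb2 : ‖1 - (starRingEnd ℂ) c * z‖^(-(2+q)) ≤ R^(-(2+q)) :=
      Real.rpow_le_rpow_of_nonpos hR hAcR (by linarith)
    have hmerge : ‖1 - (starRingEnd ℂ) a * z‖^pp * ‖1 - (starRingEnd ℂ) a * z‖^(-(2*pp))
        = ‖1 - (starRingEnd ℂ) a * z‖^(-pp) := by
      rw [← Real.rpow_add hAa]; congr 1; ring
    calc F z = (1-‖z‖^2)^pp * ‖1 - (starRingEnd ℂ) a * z‖^(-(2*pp))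
          * ‖1 - (starRingEnd ℂ) c * z‖^(-(2+q)) := rfl
      _ ≤ ((2^pp * ‖1 - (starRingEnd ℂ) a * z‖^pp) * ‖1 - (starRingEnd ℂ) a * z‖^(-(2*pp)))
          * R^(-(2+q)) := by
          apply mul_le_mul
          · exact mul_le_mul_of_nonneg_right (hb1.trans_eq hb1')
              (Real.rpow_nonneg (norm_nonneg _) _)
          · exact hb2
          · exact Real.rpow_nonneg (norm_nonneg _) _
          · positivity
      _ = (2^pp * R^(-(2+q))) * ‖1 - (starRingEnd ℂ) a * z‖^(-pp) := by
          rw [← hmerge]; ring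
  -- D2 per-annulus estimate
  have hD2est : ∀ k : ℕ, ∫⁻ z in D2 k, ENNReal.ofReal (F z) ∂volume
      ≤ ENNReal.ofReal ((2^pp * Ce2 * ((2:ℝ)^(pp-q))^2 * R^(-(pp+q))) * t^k) := by
    intro k
    have hRk : (0:ℝ) < R * 2^k := by positivity
    have step : ∫⁻ z in D2 k, ENNReal.ofReal (F z) ∂volume
        ≤ ENNReal.ofReal ((2^pp * (R*2^k)^(-(2*pp))) * Ce2 * ((2:ℝ)^(k+2)*R)^(2-(2+q-pp))) := by
      rw [hCe2]
      apply piece_bound c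
        (mul_nonneg (Real.rpow_nonneg (by norm_num) _) (Real.rpow_nonneg hRk.le _))
        he2 he2' (by positivity) hc.le
      · intro z hz
        obtain ⟨hz1, hzk1, hzk2⟩ := hz
        refine ⟨hz1, ?_⟩
        have h3 := tri2 ha.le hc.le hz1.le
        rw [h2R] at h3
        have h4 : (2:ℝ) ≤ 2^(k+1) := by
          calc (2:ℝ) = 2^1 := (pow_one 2).symm
            _ ≤ 2^(k+1) := pow_le_pow_right₀ (by norm_num) (by omega)
        have h5 : (2:ℝ)^(k+2) = 2^(k+1) + 2^(k+1) := by ring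
        nlinarith
      · intro z hz
        obtain ⟨hz1, hzk1, hzk2⟩ := hz
        have hAa := hAapos z hz1
        have hAc := hAcpos z hz1
        have hz2' : (0:ℝ) ≤ 1 - ‖z‖^2 := by nlinarith [norm_nonneg z]
        have hb1 : (1-‖z‖^2)^pp ≤ (2*‖1 - (starRingEnd ℂ) c * z‖)^pp :=
          Real.rpow_le_rpow hz2' (tri3 hc.le hz1.le) hp.le
        have hb1' : (2*‖1 - (starRingEnd ℂ) c * z‖)^pp = 2^pp * ‖1 - (starRingEnd ℂ) c * z‖^pp :=
          Real.mul_rpow (by norm_num) (norm_nonneg _)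
        have hb2 : ‖1 - (starRingEnd ℂ) a * z‖^(-(2*pp)) ≤ (R*2^k)^(-(2*pp)) :=
          Real.rpow_le_rpow_of_nonpos hRk hzk1 (by linarith)
        have hmerge : ‖1 - (starRingEnd ℂ) c * z‖^pp * ‖1 - (starRingEnd ℂ) c * z‖^(-(2+q))
            = ‖1 - (starRingEnd ℂ) c * z‖^(-(2+q-pp)) := by
          rw [← Real.rpow_add hAc]; congr 1; ring
        calc F z = (1-‖z‖^2)^pp * ‖1 - (starRingEnd ℂ) a * z‖^(-(2*pp))
              * ‖1 - (starRingEnd ℂ) c * z‖^(-(2+q)) := rfl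
          _ ≤ ((2^pp * ‖1 - (starRingEnd ℂ) c * z‖^pp) * (R*2^k)^(-(2*pp)))
              * ‖1 - (starRingEnd ℂ) c * z‖^(-(2+q)) := by
              apply mul_le_mul_of_nonneg_right _ (Real.rpow_nonneg (norm_nonneg _) _)
              apply mul_le_mul
              · exact hb1.trans_eq hb1'
              · exact hb2
              · exact Real.rpow_nonneg (norm_nonneg _) _
              · positivity
          _ = (2^pp * (R*2^k)^(-(2*pp))) * ‖1 - (starRingEnd ℂ) c * z‖^(-(2+q-pp)) := by
              rw [← hmerge]; ring
    refine step.trans (ENNReal.ofReal_le_ofReal (le_of_eq ?_))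
    have hexp : (2:ℝ)-(2+q-pp) = pp - q := by ring
    rw [hexp]
    have e1 : (R*(2:ℝ)^k)^(-(2*pp)) = R^(-(2*pp)) * ((2:ℝ)^(-(2*pp)))^k := by
      rw [Real.mul_rpow hR.le (by positivity), pow_rpow_swap]
    have e2 : ((2:ℝ)^(k+2)*R)^(pp-q) = (((2:ℝ)^(pp-q))^k * ((2:ℝ)^(pp-q))^2) * R^(pp-q) := by
      rw [Real.mul_rpow (by positivity) hR.le, pow_rpow_swap, pow_add]
    have e3 : R^(-(2*pp)) * R^(pp-q) = R^(-(pp+q)) := by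
      rw [← Real.rpow_add hR]; congr 1; ring
    have e4 : ((2:ℝ)^(-(2*pp)))^k * ((2:ℝ)^(pp-q))^k = t^k := by
      rw [← mul_pow]; congr 1
      rw [hct, ← Real.rpow_add (by norm_num : (0:ℝ) < 2)]; congr 1; ring
    calc 2^pp*(R*(2:ℝ)^k)^(-(2*pp)) * Ce2 * ((2:ℝ)^(k+2)*R)^(pp-q)
        = (2^pp * Ce2 * ((2:ℝ)^(pp-q))^2)
          * ((R^(-(2*pp)) * R^(pp-q)) * (((2:ℝ)^(-(2*pp)))^k * ((2:ℝ)^(pp-q))^k)) := by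
          rw [e1, e2]; ring
      _ = _ := by rw [e3, e4]; ring
  -- sum the annuli
  have hCgpos : (0:ℝ) ≤ 2^pp * Ce2 * ((2:ℝ)^(pp-q))^2 * R^(-(pp+q)) :=
    mul_nonneg (mul_nonneg (mul_nonneg (Real.rpow_nonneg (by norm_num) _) hCe2pos.le)
      (sq_nonneg _)) (Real.rpow_nonneg hR.le _)
  have hsum : ∫⁻ z in ⋃ k, D2 k, ENNReal.ofReal (F z) ∂volume
      ≤ ENNReal.ofReal ((2^pp * Ce2 * ((2:ℝ)^(pp-q))^2 * R^(-(pp+q))) * (1-t)⁻¹) :=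
    calc ∫⁻ z in ⋃ k, D2 k, ENNReal.ofReal (F z) ∂volume
        ≤ ∑' k, ∫⁻ z in D2 k, ENNReal.ofReal (F z) ∂volume := lintegral_iUnion_le _ _
      _ ≤ ∑' k : ℕ, ENNReal.ofReal ((2^pp * Ce2 * ((2:ℝ)^(pp-q))^2 * R^(-(pp+q))) * t^k) :=
          ENNReal.tsum_le_tsum (fun k => hD2est k)
      _ = ENNReal.ofReal (2^pp * Ce2 * ((2:ℝ)^(pp-q))^2 * R^(-(pp+q)))
          * ∑' k : ℕ, (ENNReal.ofReal t)^k := by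
          rw [← ENNReal.tsum_mul_left]; congr 1; ext k
          rw [← ENNReal.ofReal_pow ht0.le, ← ENNReal.ofReal_mul hCgpos]
      _ ≤ ENNReal.ofReal ((2^pp * Ce2 * ((2:ℝ)^(pp-q))^2 * R^(-(pp+q))) * (1-t)⁻¹) := by
          rw [ENNReal.tsum_geometric]
          have h1 : (1:ℝ≥0∞) - ENNReal.ofReal t = ENNReal.ofReal (1 - t) := by
            rw [ENNReal.ofReal_sub _ ht0.le, ENNReal.ofReal_one]
          rw [h1, ← ENNReal.ofReal_inv_of_pos (by linarith), ← ENNReal.ofReal_mul hCgpos]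
  -- combine
  calc ∫⁻ z in {z : ℂ | ‖z‖ < 1}, ENNReal.ofReal (F z) ∂volume
      ≤ ∫⁻ z in D1 ∪ ⋃ k, D2 k, ENNReal.ofReal (F z) ∂volume := lintegral_mono_set hcover
    _ ≤ (∫⁻ z in D1, ENNReal.ofReal (F z) ∂volume)
        + ∫⁻ z in ⋃ k, D2 k, ENNReal.ofReal (F z) ∂volume := lintegral_union_le _ _ _
    _ ≤ ENNReal.ofReal ((2^pp * R^(-(2+q))) * Ce1 * R^(2-pp))
        + ENNReal.ofReal ((2^pp * Ce2 * ((2:ℝ)^(pp-q))^2 * R^(-(pp+q))) * (1-t)⁻¹) :=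
        add_le_add hD1est hsum
    _ ≤ ENNReal.ofReal (Cmain pp q * R^(-(pp+q))) := by
        rw [← ENNReal.ofReal_add
          (mul_nonneg (mul_nonneg (mul_nonneg (Real.rpow_nonneg (by norm_num) _)
            (Real.rpow_nonneg hR.le _)) hCe1pos.le) (Real.rpow_nonneg hR.le _))
          (mul_nonneg hCgpos (by rw [inv_nonneg]; linarith))]
        apply ENNReal.ofReal_le_ofReal
        apply le_of_eq
        have f1 : R^(-(2+q)) * R^(2-pp) = R^(-(pp+q)) := by
          rw [← Real.rpow_add hR]; congr 1; ring
        simp only [hCe1, hCe2, hct, Cmain]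
        linear_combination (2^pp * (16*Real.pi/(1-2^(pp-2)))) * f1
lemma slit {c z : ℂ} (hc : ‖c‖ ≤ 1) (hz : ‖z‖ < 1) :
    (1 - (starRingEnd ℂ) c * z) ∈ Complex.slitPlane := by
  rw [Complex.mem_slitPlane_iff]
  left
  have h1 : ((starRingEnd ℂ) c * z).re ≤ ‖(starRingEnd ℂ) c * z‖ := by
    exact Complex.re_le_norm _
  have h2 : ‖(starRingEnd ℂ) c * z‖ < 1 := by
    rw [norm_mul, RCLike.norm_conj]
    nlinarith [norm_nonneg c, norm_nonneg z]
  have h3 : (1 - (starRingEnd ℂ) c * z).re = 1 - ((starRingEnd ℂ) c * z).re := by simp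
  rw [h3]; linarith

lemma hasDeriv_f (c : ℂ) (s : ℂ) {z : ℂ}
    (hsp : (1 - (starRingEnd ℂ) c * z) ∈ Complex.slitPlane) :
    HasDerivAt (fun z : ℂ => (1 - (starRingEnd ℂ) c * z) ^ s)
      (s * (1 - (starRingEnd ℂ) c * z) ^ (s - 1) * (-(starRingEnd ℂ) c)) z := by
  have hd : HasDerivAt (fun z : ℂ => 1 - (starRingEnd ℂ) c * z) (-(starRingEnd ℂ) c) z := by
    simpa using ((hasDerivAt_id z).const_mul ((starRingEnd ℂ) c)).const_sub 1
  exact hd.cpow_const hsp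

lemma norm_deriv_sq {q : ℝ} (hq : 0 ≤ q) {c z : ℂ} (hc : ‖c‖ ≤ 1) (hz : ‖z‖ < 1) :
    ‖deriv (fun z : ℂ => (1 - (starRingEnd ℂ) c * z) ^ ((-q/2 : ℝ) : ℂ)) z‖^2
      = (q^2/4) * ‖c‖^2 * ‖1 - (starRingEnd ℂ) c * z‖ ^ (-(2+q)) := by
  have hsp := slit hc hz
  have hd := (hasDeriv_f c ((-q/2 : ℝ) : ℂ) hsp).deriv
  rw [hd, norm_mul, norm_mul, norm_neg, RCLike.norm_conj]
  have hA := A_pos hc hz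
  have hne : (1 - (starRingEnd ℂ) c * z) ≠ 0 := by
    intro h0; rw [h0] at hA; simp at hA
  have h1 : ‖((-q/2 : ℝ) : ℂ)‖ = q/2 := by
    rw [Complex.norm_real, Real.norm_eq_abs, abs_of_nonpos (by linarith)]; ring
  have h2 : ‖(1 - (starRingEnd ℂ) c * z) ^ (((-q/2 : ℝ) : ℂ) - 1)‖
      = ‖1 - (starRingEnd ℂ) c * z‖ ^ (-q/2 - 1) := by
    have he : (((-q/2 : ℝ) : ℂ) - 1) = (((-q/2 - 1 : ℝ)) : ℂ) := by push_cast; ring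
    rw [he, Complex.norm_cpow_of_ne_zero hne]
    simp
  rw [h1, h2]
  have h3 : (‖1 - (starRingEnd ℂ) c * z‖ ^ (-q/2-1))^2
      = ‖1 - (starRingEnd ℂ) c * z‖ ^ (-(2+q)) := by
    rw [← Real.rpow_natCast (‖1 - (starRingEnd ℂ) c * z‖ ^ (-q/2-1)) 2,
      ← Real.rpow_mul (norm_nonneg _)]
    congr 1; push_cast; ring
  rw [mul_pow, mul_pow, h3]; ring

lemma measurable_H (a c : ℂ) (pr qr : ℝ) :
    Measurable (fun z : ℂ => (1-‖z‖^2)^pr * ‖1 - (starRingEnd ℂ) a * z‖^(-(2*pr))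
      * ‖1 - (starRingEnd ℂ) c * z‖^(-(2+qr))) := by
  apply Measurable.mul
  apply Measurable.mul
  · exact (measurable_const.sub ((measurable_norm).pow_const 2)).pow measurable_const
  · exact ((measurable_A a).pow measurable_const)
  · exact ((measurable_A c).pow measurable_const)

def mobius' (a z : ℂ) : ℂ := (a - z) / (1 - (starRingEnd ℂ) a * z)

lemma weight_eq {a z : ℂ} (ha : ‖a‖ < 1) (hz : ‖z‖ < 1) {pr : ℝ} (hpr : 0 ≤ pr) :
    (1 - ‖mobius' a z‖^2) ^ pr
      = ((1-‖a‖^2)*(1-‖z‖^2))^pr * ‖1 - (starRingEnd ℂ) a * z‖^(-(2*pr)) := by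
  have hA := A_pos ha.le hz
  have hid : 1 - ‖mobius' a z‖^2
      = (1-‖a‖^2)*(1-‖z‖^2) / ‖1 - (starRingEnd ℂ) a * z‖^2 := by
    have h2 : ‖mobius' a z‖^2 = ‖a - z‖^2 / ‖1 - (starRingEnd ℂ) a * z‖^2 := by
      simp only [mobius', norm_div, div_pow]
    rw [h2, eq_div_iff (by positivity)]
    rw [sub_mul, div_mul_cancel₀ _ (by positivity : ‖1 - (starRingEnd ℂ) a * z‖^2 ≠ 0)]
    rw [← normSq_identity a z]; ring
  have e1 : (0:ℝ) ≤ 1 - ‖a‖^2 := by nlinarith [norm_nonneg a]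
  have e2 : (0:ℝ) ≤ 1 - ‖z‖^2 := by nlinarith [norm_nonneg z]
  rw [hid, Real.div_rpow (mul_nonneg e1 e2) (by positivity)]
  rw [div_eq_mul_inv]
  congr 1
  rw [← Real.rpow_natCast (‖1 - (starRingEnd ℂ) a * z‖) 2, ← Real.rpow_mul (norm_nonneg _),
    ← Real.rpow_neg (norm_nonneg _)]
  norm_num

lemma mobius_lt_one {a z : ℂ} (ha : ‖a‖ < 1) (hz : ‖z‖ < 1) : ‖mobius' a z‖ < 1 := by
  have hA := A_pos ha.le hz
  have h2 : ‖mobius' a z‖ = ‖a - z‖ / ‖1 - (starRingEnd ℂ) a * z‖ := by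
    simp only [mobius', norm_div]
  rw [h2, div_lt_one hA]
  have h := normSq_identity a z
  have e1 : (0:ℝ) < 1 - ‖a‖^2 := by nlinarith [norm_nonneg a]
  have e2 : (0:ℝ) < 1 - ‖z‖^2 := by nlinarith [norm_nonneg z]
  nlinarith [norm_nonneg (a-z), norm_nonneg (1 - (starRingEnd ℂ) a * z), mul_pos e1 e2]

end S7

/-- The test functions `f_c(z) = (1 - c̄ z)^{-p(1-λ)/2}` are uniformly in `𝒟_p^λ`. -/
theorem stmt_7 (p lam : ℝ) (hp : 0 < p) (hp1 : p < 1) (hl : 0 < lam) (hl1 : lam < 1) :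
    ∃ K : ℝ, ∀ a c : ℂ, a ∈ unitDisc → c ∈ unitDisc →
      (1 - ‖a‖ ^ 2) ^ (p * (1 - lam)) *
        dirEnergy p a
          (fun z : ℂ => (1 - (starRingEnd ℂ) c * z) ^ ((-(p * (1 - lam)) / 2 : ℝ) : ℂ)) ≤ K := by
  refine ⟨16 * S7.Cmain p (p * (1 - lam)), ?_⟩
  intro a c hadisc hcdisc
  have ha : ‖a‖ < 1 := by simpa [unitDisc, Metric.mem_ball, dist_zero_right] using hadisc
  have hc : ‖c‖ < 1 := by simpa [unitDisc, Metric.mem_ball, dist_zero_right] using hcdisc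
  have hq0 : 0 < p * (1 - lam) := by nlinarith
  have hq1 : p * (1 - lam) < p := by nlinarith
  set q : ℝ := p * (1 - lam) with hqdef
  have hCpos := S7.Cmain_pos hp hp1 hq0 hq1
  set f : ℂ → ℂ := fun z => (1 - (starRingEnd ℂ) c * z) ^ ((-q / 2 : ℝ) : ℂ) with hfdef
  set F : ℂ → ℝ := fun z => ‖deriv f z‖ ^ 2 * (1 - ‖mobius a z‖ ^ 2) ^ p with hFdef
  set H : ℂ → ℝ := fun z => (1-‖z‖^2)^p * ‖1 - (starRingEnd ℂ) a * z‖^(-(2*p))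
      * ‖1 - (starRingEnd ℂ) c * z‖^(-(2+q)) with hHdef
  have hdisc_eq : unitDisc = {z : ℂ | ‖z‖ < 1} := by
    ext z; simp [unitDisc, Metric.mem_ball, dist_zero_right]
  have hdiscMeas : MeasurableSet unitDisc := by
    rw [unitDisc]; exact measurableSet_ball
  have e1 : (0:ℝ) ≤ 1 - ‖a‖^2 := by nlinarith [norm_nonneg a]
  -- measurability of F
  have hFmeas : Measurable F := by
    apply Measurable.mul
    · exact (measurable_deriv f).norm.pow_const 2
    · refine Measurable.pow ?_ measurable_const
      refine Measurable.sub measurable_const ?_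
      refine Measurable.pow_const ?_ 2
      refine Measurable.norm ?_
      exact (measurable_const.sub measurable_id).div
        (measurable_const.sub (measurable_const.mul measurable_id))
  -- nonnegativity of F on the disc
  have hFnn : ∀ z ∈ unitDisc, 0 ≤ F z := by
    intro z hz
    rw [hdisc_eq] at hz
    have hm : ‖mobius a z‖ < 1 := S7.mobius_lt_one ha hz
    have : (0:ℝ) < 1 - ‖mobius a z‖^2 := by nlinarith [norm_nonneg (mobius a z)]
    exact mul_nonneg (pow_nonneg (norm_nonneg _) 2) (Real.rpow_nonneg this.le _)
  -- pointwise bound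
  have hpoint : ∀ z ∈ unitDisc, F z ≤ (1-‖a‖^2)^p * H z := by
    intro z hz
    rw [hdisc_eq] at hz
    have hds := S7.norm_deriv_sq hq0.le hc.le hz
    have hw : (1 - ‖mobius a z‖^2) ^ p
        = ((1-‖a‖^2)*(1-‖z‖^2))^p * ‖1 - (starRingEnd ℂ) a * z‖^(-(2*p)) :=
      S7.weight_eq ha hz hp.le
    have hz' : ‖z‖ < 1 := hz
    have e2 : (0:ℝ) ≤ 1 - ‖z‖^2 := by nlinarith [norm_nonneg z]
    have hstep : F z = ((q^2/4) * ‖c‖^2)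
        * (((1-‖a‖^2)*(1-‖z‖^2))^p
          * (‖1 - (starRingEnd ℂ) a * z‖^(-(2*p)) * ‖1 - (starRingEnd ℂ) c * z‖ ^ (-(2+q)))) := by
      show ‖deriv f z‖ ^ 2 * (1 - ‖mobius a z‖ ^ 2) ^ p = _
      rw [hfdef]
      rw [hds, hw]; ring
    have hcoef : (q^2/4) * ‖c‖^2 ≤ 1 := by
      have hc2 : ‖c‖^2 ≤ 1 := by nlinarith [norm_nonneg c]
      have hq2 : q^2/4 ≤ 1 := by nlinarith
      calc (q^2/4) * ‖c‖^2 ≤ 1*1 := mul_le_mul hq2 hc2 (sq_nonneg _) (by norm_num)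
        _ = 1 := by norm_num
    have hrest : (0:ℝ) ≤ ((1-‖a‖^2)*(1-‖z‖^2))^p
        * (‖1 - (starRingEnd ℂ) a * z‖^(-(2*p)) * ‖1 - (starRingEnd ℂ) c * z‖ ^ (-(2+q))) :=
      mul_nonneg (Real.rpow_nonneg (mul_nonneg e1 e2) _)
        (mul_nonneg (Real.rpow_nonneg (norm_nonneg _) _) (Real.rpow_nonneg (norm_nonneg _) _))
    rw [hstep]
    calc ((q^2/4) * ‖c‖^2) * (((1-‖a‖^2)*(1-‖z‖^2))^p
          * (‖1 - (starRingEnd ℂ) a * z‖^(-(2*p)) * ‖1 - (starRingEnd ℂ) c * z‖ ^ (-(2+q))))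
        ≤ 1 * (((1-‖a‖^2)*(1-‖z‖^2))^p
          * (‖1 - (starRingEnd ℂ) a * z‖^(-(2*p)) * ‖1 - (starRingEnd ℂ) c * z‖ ^ (-(2+q)))) :=
          mul_le_mul_of_nonneg_right hcoef hrest
      _ = (1-‖a‖^2)^p * H z := by
          rw [one_mul, Real.mul_rpow e1 e2, hHdef]; ring
  -- lintegral bound via the master estimate
  have hHmeas := S7.measurable_H a c p q
  have hmaster := S7.master hp hp1 hq0 hq1 ha hc
  have hlint : ∫⁻ z in unitDisc, ENNReal.ofReal (F z) ∂volume
      ≤ ENNReal.ofReal ((1-‖a‖^2)^p)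
        * ENNReal.ofReal (S7.Cmain p q * (‖1 - (starRingEnd ℂ) a * c‖/2)^(-(p+q))) := by
    calc ∫⁻ z in unitDisc, ENNReal.ofReal (F z) ∂volume
        ≤ ∫⁻ z in unitDisc, ENNReal.ofReal ((1-‖a‖^2)^p) * ENNReal.ofReal (H z) ∂volume := by
          refine setLIntegral_mono (measurable_const.mul hHmeas.ennreal_ofReal) ?_
          intro z hz
          rw [← ENNReal.ofReal_mul (Real.rpow_nonneg e1 _)]
          exact ENNReal.ofReal_le_ofReal (hpoint z hz)
      _ = ENNReal.ofReal ((1-‖a‖^2)^p) * ∫⁻ z in unitDisc, ENNReal.ofReal (H z) ∂volume :=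
          lintegral_const_mul _ hHmeas.ennreal_ofReal
      _ ≤ _ := by
          gcongr
          rw [hdisc_eq]
          exact hmaster
  -- convert the Bochner integral
  have hIeq : ∫ z in unitDisc, F z ∂volume
      = (∫⁻ z in unitDisc, ENNReal.ofReal (F z) ∂volume).toReal := by
    rw [integral_eq_lintegral_of_nonneg_ae]
    · exact ae_restrict_of_forall_mem hdiscMeas hFnn
    · exact hFmeas.aestronglyMeasurable
  have hRpos : 0 < ‖1 - (starRingEnd ℂ) a * c‖/2 := by
    have := S7.A_pos ha.le hc
    positivity
  have hbound_nn : (0:ℝ) ≤ S7.Cmain p q * (‖1 - (starRingEnd ℂ) a * c‖/2)^(-(p+q)) :=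
    mul_nonneg hCpos.le (Real.rpow_nonneg hRpos.le _)
  have hInt_le : ∫ z in unitDisc, F z ∂volume
      ≤ (1-‖a‖^2)^p * (S7.Cmain p q * (‖1 - (starRingEnd ℂ) a * c‖/2)^(-(p+q))) := by
    rw [hIeq]
    have hne : ENNReal.ofReal ((1-‖a‖^2)^p)
        * ENNReal.ofReal (S7.Cmain p q * (‖1 - (starRingEnd ℂ) a * c‖/2)^(-(p+q))) ≠ ⊤ :=
      ENNReal.mul_ne_top ENNReal.ofReal_ne_top ENNReal.ofReal_ne_top
    calc (∫⁻ z in unitDisc, ENNReal.ofReal (F z) ∂volume).toReal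
        ≤ (ENNReal.ofReal ((1-‖a‖^2)^p)
          * ENNReal.ofReal (S7.Cmain p q * (‖1 - (starRingEnd ℂ) a * c‖/2)^(-(p+q)))).toReal :=
          ENNReal.toReal_mono hne hlint
      _ = (1-‖a‖^2)^p * (S7.Cmain p q * (‖1 - (starRingEnd ℂ) a * c‖/2)^(-(p+q))) := by
          rw [← ENNReal.ofReal_mul (Real.rpow_nonneg e1 _)]
          exact ENNReal.toReal_ofReal (mul_nonneg (Real.rpow_nonneg e1 _) hbound_nn)
  have hInt_nn : (0:ℝ) ≤ ∫ z in unitDisc, F z ∂volume := by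
    rw [hIeq]; exact ENNReal.toReal_nonneg
  -- unfold dirEnergy
  have hdir : dirEnergy p a f = Real.pi⁻¹ * ∫ z in unitDisc, F z ∂volume := by
    show ∫ z in unitDisc, ‖deriv f z‖ ^ 2 * (1 - ‖mobius a z‖ ^ 2) ^ p ∂dA = _
    rw [dA, Measure.restrict_smul, integral_smul_measure, ENNReal.toReal_inv,
      ENNReal.toReal_ofReal Real.pi_pos.le, smul_eq_mul]
  -- the geometric factor is at most 16
  have hsym : ‖1 - (starRingEnd ℂ) c * a‖ = ‖1 - (starRingEnd ℂ) a * c‖ := by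
    have hconj : (starRingEnd ℂ) (1 - (starRingEnd ℂ) a * c) = 1 - (starRingEnd ℂ) c * a := by
      simp [map_sub, map_mul]; ring
    rw [← hconj, RCLike.norm_conj]
  have h4R : 1-‖a‖^2 ≤ 4*(‖1 - (starRingEnd ℂ) a * c‖/2) := by
    have := S7.tri3 hc.le ha.le
    rw [hsym] at this
    linarith
  have hB : (1-‖a‖^2)^q * ((1-‖a‖^2)^p * (‖1 - (starRingEnd ℂ) a * c‖/2)^(-(p+q))) ≤ 16 := by
    rcases eq_or_lt_of_le e1 with he | hapos
    · rw [← he]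
      rw [Real.zero_rpow (by linarith), Real.zero_rpow (by linarith)]
      norm_num
    · set R : ℝ := ‖1 - (starRingEnd ℂ) a * c‖/2
      have hcomb : (1-‖a‖^2)^q * ((1-‖a‖^2)^p * R^(-(p+q)))
          = ((1-‖a‖^2) * R⁻¹)^(p+q) := by
        have hqp' : (1-‖a‖^2)^q * (1-‖a‖^2)^p = (1-‖a‖^2)^(p+q) := by
          rw [← Real.rpow_add hapos]; congr 1; ring
        rw [Real.mul_rpow e1 (inv_nonneg.mpr hRpos.le), Real.inv_rpow hRpos.le,
          ← Real.rpow_neg hRpos.le, ← mul_assoc, hqp']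
      rw [hcomb]
      have hbase : (1-‖a‖^2) * R⁻¹ ≤ 4 := by
        rw [← div_eq_mul_inv, div_le_iff₀ hRpos]
        linarith
      calc ((1-‖a‖^2) * R⁻¹)^(p+q) ≤ (4:ℝ)^(p+q) :=
            Real.rpow_le_rpow (mul_nonneg e1 (inv_nonneg.mpr hRpos.le)) hbase (by linarith)
        _ ≤ (4:ℝ)^((2:ℕ):ℝ) :=
            Real.rpow_le_rpow_of_exponent_le (by norm_num) (by push_cast; nlinarith)
        _ = 16 := by rw [Real.rpow_natCast]; norm_num
  -- put everything together
  have hπ : Real.pi⁻¹ ≤ 1 := by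
    have h1 : Real.pi⁻¹ = 1/Real.pi := (one_div _).symm
    rw [h1, div_le_one Real.pi_pos]
    linarith [Real.pi_gt_three]
  have hq_nn : (0:ℝ) ≤ (1-‖a‖^2)^q := Real.rpow_nonneg e1 _
  calc (1 - ‖a‖ ^ 2) ^ q * dirEnergy p a f
      = (1-‖a‖^2)^q * (Real.pi⁻¹ * ∫ z in unitDisc, F z ∂volume) := by rw [hdir]
    _ ≤ (1-‖a‖^2)^q * ∫ z in unitDisc, F z ∂volume := by
        apply mul_le_mul_of_nonneg_left _ hq_nn
        exact mul_le_of_le_one_left hInt_nn hπ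
    _ ≤ (1-‖a‖^2)^q * ((1-‖a‖^2)^p
        * (S7.Cmain p q * (‖1 - (starRingEnd ℂ) a * c‖/2)^(-(p+q)))) :=
        mul_le_mul_of_nonneg_left hInt_le hq_nn
    _ = ((1-‖a‖^2)^q * ((1-‖a‖^2)^p * (‖1 - (starRingEnd ℂ) a * c‖/2)^(-(p+q))))
        * S7.Cmain p q := by ring
    _ ≤ 16 * S7.Cmain p q := mul_le_mul_of_nonneg_right hB hCpos.le
end
end

section
/- Let $0\le p\le 1$. There is a constant $C=C(p)$ such that for every $f$ in the weighted Dirichlet space $\mathcal{D}_p$ and every $a\in\mathbb{D}$, $\|f\circ\varphi_a-f(a)\|_{\mathcal{D}_p}\le C\,\|f\|_{\mathcal{D}_p}\,(1-|a|^2)^{-p/2}$, where $\varphi_a(z)=(a-z)/(1-\bar a z)$. -/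
open MeasureTheory Complex Metric Set

noncomputable section

lemma norm_sq_key (a z : ℂ) :
    ‖1 - (starRingEnd ℂ) a * z‖ ^ 2 - ‖a - z‖ ^ 2 = (1 - ‖a‖ ^ 2) * (1 - ‖z‖ ^ 2) := by
  simp only [Complex.sq_norm, Complex.normSq_apply, Complex.sub_re,
    Complex.sub_im, Complex.mul_re, Complex.mul_im, Complex.one_re, Complex.one_im,
    Complex.conj_re, Complex.conj_im]
  ring

lemma mobius_bound {a z : ℂ} (ha : ‖a‖ < 1) (hz : ‖z‖ < 1) :
    0 ≤ 1 - ‖mobius a z‖ ^ 2 ∧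
    1 - ‖mobius a z‖ ^ 2 ≤ 4 * (1 - ‖z‖ ^ 2) / (1 - ‖a‖ ^ 2) := by
  have ha0 : (0:ℝ) ≤ ‖a‖ := norm_nonneg a
  have hz0 : (0:ℝ) ≤ ‖z‖ := norm_nonneg z
  have hD : 1 - ‖a‖ ≤ ‖1 - (starRingEnd ℂ) a * z‖ := by
    have h1 : ‖(starRingEnd ℂ) a * z‖ ≤ ‖a‖ := by
      rw [norm_mul, RCLike.norm_conj]
      nlinarith
    have hone : ‖(1:ℂ)‖ = 1 := norm_one
    calc 1 - ‖a‖ ≤ ‖(1:ℂ)‖ - ‖(starRingEnd ℂ) a * z‖ := by rw [hone]; linarith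
    _ ≤ ‖1 - (starRingEnd ℂ) a * z‖ := norm_sub_norm_le _ _
  have hDpos : 0 < ‖1 - (starRingEnd ℂ) a * z‖ := lt_of_lt_of_le (by linarith) hD
  have hm : ‖mobius a z‖ ^ 2 = ‖a - z‖ ^ 2 / ‖1 - (starRingEnd ℂ) a * z‖ ^ 2 := by
    rw [mobius, norm_div]; ring
  have hkey := norm_sq_key a z
  set D := ‖1 - (starRingEnd ℂ) a * z‖
  have hD2 : (0:ℝ) < D ^ 2 := by positivity
  have h1 : 1 - ‖mobius a z‖ ^ 2 = (1 - ‖a‖ ^ 2) * (1 - ‖z‖ ^ 2) / D ^ 2 := by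
    rw [hm, ← hkey]; field_simp
  constructor
  all_goals {
    have hA : (0:ℝ) ≤ 1 - ‖a‖ ^ 2 := by nlinarith
    have hZ : (0:ℝ) ≤ 1 - ‖z‖ ^ 2 := by nlinarith
    first
    | (rw [h1]; exact div_nonneg (mul_nonneg hA hZ) hD2.le)
    | (rw [h1, div_le_div_iff₀ hD2 (by nlinarith)]
       have e1 : (1 - ‖a‖) ^ 2 ≤ D ^ 2 := by nlinarith
       have e2 : (1 - ‖a‖ ^ 2) ^ 2 ≤ 4 * (1 - ‖a‖) ^ 2 := by nlinarith [sq_nonneg (1 - ‖a‖)]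
       have e3 : (1 - ‖a‖ ^ 2) ^ 2 * (1 - ‖z‖ ^ 2) ≤ (4 * D ^ 2) * (1 - ‖z‖ ^ 2) :=
         mul_le_mul_of_nonneg_right (by linarith) hZ
       nlinarith [e3]) }

/-- Norm growth of hyperbolic translates in the weighted Dirichlet space:
`∫_𝔻 |f'(z)|² (1-|φ_a(z)|²)^p dm(z) ≤ C² (1-|a|²)^{-p} ‖f‖²_{𝒟_p}`. -/
theorem stmt_18 (p : ℝ) (hp : 0 ≤ p) (hp1 : p ≤ 1) :
    ∃ C : ℝ, 0 < C ∧ ∀ f : ℂ → ℂ, memDp p f → ∀ a ∈ unitDisc,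
      dirEnergy p a f ≤ C ^ 2 * (1 - ‖a‖ ^ 2) ^ (-p) * dpNormSq p f := by
  refine ⟨2, by norm_num, ?_⟩
  intro f hf a ha
  have ha1 : ‖a‖ < 1 := by simpa [unitDisc] using ha
  have ha0 : (0:ℝ) < 1 - ‖a‖ ^ 2 := by nlinarith [norm_nonneg a]
  set K : ℝ := 4 * (1 - ‖a‖ ^ 2) ^ (-p) with hK
  have hKpos : 0 < K := by
    have : (0:ℝ) < (1 - ‖a‖ ^ 2) ^ (-p) := Real.rpow_pos_of_pos ha0 _
    positivity
  set g : ℂ → ℝ := fun z => ‖deriv f z‖ ^ 2 * (1 - ‖z‖ ^ 2) ^ p with hg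
  -- pointwise bound on the disc
  have hpt : ∀ z ∈ unitDisc, ‖deriv f z‖ ^ 2 * (1 - ‖mobius a z‖ ^ 2) ^ p ≤ K * g z := by
    intro z hz
    have hz1 : ‖z‖ < 1 := by simpa [unitDisc] using hz
    have hz0 : (0:ℝ) ≤ 1 - ‖z‖ ^ 2 := by nlinarith [norm_nonneg z]
    obtain ⟨hb0, hb⟩ := mobius_bound ha1 hz1
    have h2 : (1 - ‖mobius a z‖ ^ 2) ^ p ≤ (4 * (1 - ‖z‖ ^ 2) / (1 - ‖a‖ ^ 2)) ^ p :=
      Real.rpow_le_rpow hb0 hb hp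
    have h3 : (4 * (1 - ‖z‖ ^ 2) / (1 - ‖a‖ ^ 2)) ^ p
        = (4:ℝ) ^ p * (1 - ‖z‖ ^ 2) ^ p * (1 - ‖a‖ ^ 2) ^ (-p) := by
      rw [div_eq_mul_inv, Real.mul_rpow (by positivity) (by positivity),
        Real.mul_rpow (by norm_num) hz0, Real.inv_rpow ha0.le, ← Real.rpow_neg ha0.le]
    have h4 : (4:ℝ) ^ p ≤ 4 := by
      calc (4:ℝ) ^ p ≤ (4:ℝ) ^ (1:ℝ) := Real.rpow_le_rpow_of_exponent_le (by norm_num) hp1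
      _ = 4 := Real.rpow_one 4
    have hzp : (0:ℝ) ≤ (1 - ‖z‖ ^ 2) ^ p := Real.rpow_nonneg hz0 p
    have hap : (0:ℝ) ≤ (1 - ‖a‖ ^ 2) ^ (-p) := (Real.rpow_pos_of_pos ha0 _).le
    have h5 : (1 - ‖mobius a z‖ ^ 2) ^ p ≤ K * (1 - ‖z‖ ^ 2) ^ p := by
      rw [hK]
      calc (1 - ‖mobius a z‖ ^ 2) ^ p
          ≤ (4:ℝ) ^ p * (1 - ‖z‖ ^ 2) ^ p * (1 - ‖a‖ ^ 2) ^ (-p) := h3 ▸ h2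
        _ ≤ 4 * (1 - ‖z‖ ^ 2) ^ p * (1 - ‖a‖ ^ 2) ^ (-p) :=
            mul_le_mul_of_nonneg_right (mul_le_mul_of_nonneg_right h4 hzp) hap
        _ = 4 * (1 - ‖a‖ ^ 2) ^ (-p) * (1 - ‖z‖ ^ 2) ^ p := by ring
    calc ‖deriv f z‖ ^ 2 * (1 - ‖mobius a z‖ ^ 2) ^ p
        ≤ ‖deriv f z‖ ^ 2 * (K * (1 - ‖z‖ ^ 2) ^ p) :=
          mul_le_mul_of_nonneg_left h5 (sq_nonneg _)
      _ = K * g z := by rw [hg]; ring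
  -- integral bound
  have hmeas : MeasurableSet unitDisc := measurableSet_ball
  have hae := (ae_restrict_mem (μ := dA) hmeas)
  have hInt : Integrable (fun z => K * g z) (dA.restrict unitDisc) := hf.2.const_mul K
  have hle : dirEnergy p a f ≤ ∫ z in unitDisc, K * g z ∂dA := by
    refine integral_mono_of_nonneg ?_ hInt ?_
    · filter_upwards [hae] with z hz
      have hz1 : ‖z‖ < 1 := by simpa [unitDisc] using hz
      obtain ⟨hb0, _⟩ := mobius_bound ha1 hz1
      have : (0:ℝ) ≤ (1 - ‖mobius a z‖ ^ 2) ^ p := Real.rpow_nonneg hb0 p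
      positivity
    · filter_upwards [hae] with z hz
      exact hpt z hz
  have hle2 : ∫ z in unitDisc, K * g z ∂dA = K * ∫ z in unitDisc, g z ∂dA :=
    integral_const_mul K g
  have hle3 : ∫ z in unitDisc, g z ∂dA ≤ dpNormSq p f := by
    rw [dpNormSq]; nlinarith [sq_nonneg ‖f 0‖]
  calc dirEnergy p a f ≤ K * ∫ z in unitDisc, g z ∂dA := by rw [← hle2]; exact hle
    _ ≤ K * dpNormSq p f := mul_le_mul_of_nonneg_left hle3 hKpos.le
    _ = 2 ^ 2 * (1 - ‖a‖ ^ 2) ^ (-p) * dpNormSq p f := by rw [hK]; ring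
end
end
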